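/- (Free system, maximal squeezing.) Fix n ≥ 1 and N ≥ 0, and set A = −(1/2)𝟙_{2n} and D = (1+2N)𝟙_{2n}. Then every real symmetric 2n×2n matrix σ satisfying σ + iΩ ≥ 0 and Aσ + σAᵀ + D ≥ 0 (equivalently σ ≤ (1+2N)𝟙_{2n}) has smallest eigenvalue λ₁↑ ≥ 1/(1+2N). -/

import Mathlib

open Matrix
open scoped ComplexOrder

open Classical in
/-- The eigenvalues of a matrix in increasing order (junk value `0` if not Hermitian). -/
noncomputable def eigUp {d : ℕ} (M : Matrix (Fin d) (Fin d) ℝ) : Fin d → ℝ :=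
  if h : M.IsHermitian then h.eigenvalues ∘ Tuple.sort h.eigenvalues else 0

/-- The eigenvalues of a matrix in decreasing order. -/
noncomputable def eigDown {d : ℕ} (M : Matrix (Fin d) (Fin d) ℝ) (j : Fin d) : ℝ :=
  eigUp M j.rev

/-- The standard symplectic form on `2n` canonical variables: block diagonal with
blocks `[[0,1],[-1,0]]`. -/
def Omega (n : ℕ) : Matrix (Fin (2*n)) (Fin (2*n)) ℝ :=
  Matrix.of fun i j =>
    if (i : ℕ) + 1 = (j : ℕ) ∧ (i : ℕ) % 2 = 0 then 1
    else if (j : ℕ) + 1 = (i : ℕ) ∧ (j : ℕ) % 2 = 0 then -1 else 0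

/-- Partial transposition matrix `T = 𝟙₂^{⊕ l} ⊕ σz^{⊕ (n-l)}` for the bipartition of the
first `l` versus the last `n - l` modes. -/
def Tmat (n l : ℕ) : Matrix (Fin (2*n)) (Fin (2*n)) ℝ :=
  Matrix.diagonal fun i => if (i : ℕ) / 2 < l ∨ (i : ℕ) % 2 = 0 then 1 else -1

/-- The partially transposed symplectic form `Ω̃ = T Ω T`. -/
def OmegaPT (n l : ℕ) : Matrix (Fin (2*n)) (Fin (2*n)) ℝ :=
  Tmat n l * Omega n * Tmat n l

open Classical in
/-- The positive square root of a positive semidefinite matrix (junk value `0` otherwise). -/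
noncomputable def msqrt {d : ℕ} (M : Matrix (Fin d) (Fin d) ℝ) : Matrix (Fin d) (Fin d) ℝ :=
  if h : M.PosSemidef then
    (h.1.eigenvectorUnitary : Matrix (Fin d) (Fin d) ℝ) * diagonal (Real.sqrt ∘ h.1.eigenvalues) *
      (star h.1.eigenvectorUnitary : Matrix (Fin d) (Fin d) ℝ)
  else 0

/-- `σ + iΩ ≥ 0`: the Robertson–Schrödinger condition for a real symmetric matrix `σ`
to be a bona fide covariance matrix. -/
def IsCM (n : ℕ) (σ : Matrix (Fin (2*n)) (Fin (2*n)) ℝ) : Prop :=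
  σ.IsSymm ∧
    (σ.map (Complex.ofReal ·) + Complex.I • (Omega n).map (Complex.ofReal ·)).PosSemidef

/-- `ν̃₋²`, the square of the smallest partially transposed symplectic eigenvalue of `σ`, for
the bipartition of the first `l` versus the remaining modes: the smallest eigenvalue of
`σ^{1/2} Ω̃ᵀ σ Ω̃ σ^{1/2}`. -/
noncomputable def nuSq (n l : ℕ) (σ : Matrix (Fin (2*n)) (Fin (2*n)) ℝ) : ℝ :=
  sInf (spectrum ℝ (msqrt σ * (OmegaPT n l)ᵀ * σ * OmegaPT n l * msqrt σ))

/-- `ν̃₋`, the smallest partially transposed symplectic eigenvalue of `σ`. -/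
noncomputable def nuMin (n l : ℕ) (σ : Matrix (Fin (2*n)) (Fin (2*n)) ℝ) : ℝ :=
  Real.sqrt (nuSq n l σ)

/-- The logarithmic negativity `E_N(σ) = max (0, −log₂ ν̃₋)`. -/
noncomputable def logNeg (n l : ℕ) (σ : Matrix (Fin (2*n)) (Fin (2*n)) ℝ) : ℝ :=
  max 0 (-(Real.logb 2 (nuMin n l σ)))


lemma omegaAux_transpose (n : ℕ) : (Omega n)ᵀ = -Omega n := by
  ext i j
  simp only [transpose_apply, Matrix.neg_apply, Omega, of_apply]
  split_ifs <;> first | (exfalso; omega) | norm_num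

lemma omegaAux_sq (n : ℕ) : Omega n * Omega n = -1 := by
  ext i j
  rw [mul_apply]
  have hi := i.isLt
  have hj := j.isLt
  rcases Nat.mod_two_eq_zero_or_one (i : ℕ) with he | ho
  · have hlt : (i : ℕ) + 1 < 2*n := by omega
    rw [Finset.sum_eq_single (⟨(i : ℕ) + 1, hlt⟩ : Fin (2*n))]
    · simp only [Omega, of_apply, Matrix.neg_apply, Matrix.one_apply, Fin.ext_iff]
      try simp only [true_and, false_and]
      split_ifs <;> first | (exfalso; omega) | norm_num
    · intro b _ hb
      have hb' : (b : ℕ) ≠ (i : ℕ) + 1 := fun h => hb (by simp [Fin.ext_iff, h])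
      simp only [Omega, of_apply]
      split_ifs <;> first | (exfalso; omega) | norm_num
    · intro h; exact absurd (Finset.mem_univ _) h
  · have hlt : (i : ℕ) - 1 < 2*n := by omega
    rw [Finset.sum_eq_single (⟨(i : ℕ) - 1, hlt⟩ : Fin (2*n))]
    · simp only [Omega, of_apply, Matrix.neg_apply, Matrix.one_apply, Fin.ext_iff]
      try simp only [true_and, false_and]
      split_ifs <;> first | (exfalso; omega) | norm_num
    · intro b _ hb
      have hb' : (b : ℕ) ≠ (i : ℕ) - 1 := fun h => hb (by simp [Fin.ext_iff, h])
      simp only [Omega, of_apply]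
      split_ifs <;> first | (exfalso; omega) | norm_num
    · intro h; exact absurd (Finset.mem_univ _) h

lemma eigenvalue_bound_aux (n : ℕ) (σ : Matrix (Fin (2*n)) (Fin (2*n)) ℝ) (hH : σ.IsHermitian)
    (hPSD : (σ.map (Complex.ofReal ·) + Complex.I • (Omega n).map (Complex.ofReal ·)).PosSemidef)
    (N : ℝ)
    (hL : ((1 + 2*N) • (1 : Matrix (Fin (2*n)) (Fin (2*n)) ℝ) - σ).PosSemidef)
    (i₀ : Fin (2*n)) :
    1 / (1 + 2*N) ≤ hH.eigenvalues i₀ := by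
  set lam := hH.eigenvalues i₀ with hlam
  set v : Fin (2*n) → ℝ := ⇑(hH.eigenvectorBasis i₀) with hvdef
  have hv : σ *ᵥ v = lam • v := hH.mulVec_eigenvectorBasis i₀
  have hvv : v ⬝ᵥ v = 1 := by
    have h1 : ‖hH.eigenvectorBasis i₀‖ = 1 := hH.eigenvectorBasis.orthonormal.1 i₀
    have h2 : (inner ℝ (hH.eigenvectorBasis i₀) (hH.eigenvectorBasis i₀) : ℝ) = 1 := by
      rw [real_inner_self_eq_norm_sq, h1]; norm_num
    rw [← h2, PiLp.inner_apply]
    simp only [dotProduct, RCLike.inner_apply, conj_trivial]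
    rfl
  set u : Fin (2*n) → ℝ := (Omega n) *ᵥ v with hudef
  have hOtu : (Omega n) *ᵥ u = -v := by
    rw [hudef, mulVec_mulVec, omegaAux_sq]
    simp [neg_mulVec]
  have hvecmul : u ᵥ* Omega n = v := by
    have h3 : u ᵥ* ((Omega n)ᵀ)ᵀ = (Omega n)ᵀ *ᵥ u := vecMul_transpose _ _
    rw [transpose_transpose] at h3
    rw [h3, omegaAux_transpose, neg_mulVec, hOtu, neg_neg]
  have huOv : u ⬝ᵥ ((Omega n) *ᵥ v) = 1 := by
    rw [dotProduct_mulVec, hvecmul, hvv]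
  have huu : u ⬝ᵥ u = 1 := by
    nth_rewrite 2 [hudef]
    exact huOv
  have hvOu : v ⬝ᵥ ((Omega n) *ᵥ u) = -1 := by
    rw [hOtu, dotProduct_neg, hvv]
  have hvσv : v ⬝ᵥ (σ *ᵥ v) = lam := by
    rw [hv, dotProduct_smul, smul_eq_mul, hvv, mul_one]
  set s : ℝ := u ⬝ᵥ (σ *ᵥ u) with hs
  have hsle : s ≤ 1 + 2*N := by
    have h4 := hL.dotProduct_mulVec_nonneg u
    rw [star_trivial, sub_mulVec, smul_mulVec, one_mulVec, dotProduct_sub,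
      dotProduct_smul, smul_eq_mul, huu, mul_one] at h4
    linarith
  have key : ∀ α β : ℝ, 0 ≤ lam * (α*α) + 2*(α*β) + s * (β*β) := by
    intro α β
    set M := σ.map (Complex.ofReal ·) + Complex.I • (Omega n).map (Complex.ofReal ·) with hM
    set z : Fin (2*n) → ℂ := fun k => (↑(α * v k) : ℂ) + Complex.I * (↑(β * u k) : ℂ) with hz
    have h5 := hPSD.dotProduct_mulVec_nonneg z
    have h6 : 0 ≤ (star z ⬝ᵥ (M *ᵥ z)).re := by
      have := (Complex.le_def.mp h5).1
      simpa using this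
    have h7 : (star z ⬝ᵥ (M *ᵥ z)).re
        = α*α * (v ⬝ᵥ (σ *ᵥ v)) + β*β * (u ⬝ᵥ (σ *ᵥ u))
          - α*β*(v ⬝ᵥ ((Omega n) *ᵥ u)) + α*β*(u ⬝ᵥ ((Omega n) *ᵥ v)) := by
      have hterm : ∀ j k : Fin (2*n), ((starRingEnd ℂ) (z j) * (M j k * z k)).re
          = α*α * (v j * (σ j k * v k)) + β*β * (u j * (σ j k * u k))
            - α*β*(v j * ((Omega n) j k * u k)) + α*β*(u j * ((Omega n) j k * v k)) := by
        intro j k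
        simp only [hz, hM, Matrix.add_apply, Matrix.smul_apply, Matrix.map_apply,
          smul_eq_mul, map_add, _root_.map_mul, Complex.conj_ofReal, Complex.conj_I]
        simp [Complex.mul_re, Complex.mul_im]
        ring
      calc (star z ⬝ᵥ (M *ᵥ z)).re
          = ∑ j, ∑ k, ((starRingEnd ℂ) (z j) * (M j k * z k)).re := by
            simp only [dotProduct, mulVec, Pi.star_apply, RCLike.star_def, Finset.mul_sum,
              Complex.re_sum]
        _ = ∑ j, ∑ k, (α*α * (v j * (σ j k * v k)) + β*β * (u j * (σ j k * u k))
              - α*β*(v j * ((Omega n) j k * u k)) + α*β*(u j * ((Omega n) j k * v k))) :=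
            Finset.sum_congr rfl fun j _ => Finset.sum_congr rfl fun k _ => hterm j k
        _ = α*α * (v ⬝ᵥ (σ *ᵥ v)) + β*β * (u ⬝ᵥ (σ *ᵥ u))
              - α*β*(v ⬝ᵥ ((Omega n) *ᵥ u)) + α*β*(u ⬝ᵥ ((Omega n) *ᵥ v)) := by
            simp only [dotProduct, mulVec, Finset.mul_sum, Finset.sum_add_distrib,
              Finset.sum_sub_distrib]
    rw [h7, hvσv, hvOu, huOv, ← hs] at h6
    nlinarith [h6]
  have hd : discrim lam (-2) s ≤ 0 :=
    discrim_le_zero fun x => by linarith [key x (-1)]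
  rw [discrim] at hd
  have hls : 1 ≤ lam * s := by nlinarith [hd]
  have h0 : 0 ≤ lam := by nlinarith [key 1 0]
  have hlam0 : 0 < lam := by
    rcases h0.lt_or_eq with h | h
    · exact h
    · rw [← h, zero_mul] at hls; linarith
  have hspos : 0 < s := by nlinarith [hls, hlam0]
  have h1s : 1/s ≤ lam := by
    rw [div_le_iff₀ hspos]
    nlinarith [hls]
  have hfin : 1/(1+2*N) ≤ 1/s := one_div_le_one_div_of_le hspos hsle
  linarith

/-- **Free system, maximal squeezing.** For the free thermal dynamics
`A = −(1/2)𝟙` and `D = (1+2N)𝟙`, every covariance matrix `σ` satisfying the stabilising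
condition `Aσ + σAᵀ + D ≥ 0` has smallest eigenvalue `λ₁↑ ≥ 1/(1+2N)`. -/
theorem free_system_maximal_squeezing (n : ℕ) (hn : 1 ≤ n) (N : ℝ) (hN : 0 ≤ N)
    (A D σ : Matrix (Fin (2*n)) (Fin (2*n)) ℝ)
    (hA : A = (-(1/2) : ℝ) • 1) (hD : D = (1 + 2*N) • 1)
    (hCM : IsCM n σ) (hLyap : (A * σ + σ * Aᵀ + D).PosSemidef) :
    1 / (1 + 2*N) ≤ eigUp σ ⟨0, by omega⟩ := by
  have hH : σ.IsHermitian := by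
    rw [Matrix.IsHermitian, conjTranspose_eq_transpose_of_trivial]
    exact hCM.1
  have hL : ((1 + 2*N) • (1 : Matrix (Fin (2*n)) (Fin (2*n)) ℝ) - σ).PosSemidef := by
    have h : (1 + 2*N) • (1 : Matrix (Fin (2*n)) (Fin (2*n)) ℝ) - σ = A * σ + σ * Aᵀ + D := by
      rw [hA, hD, Matrix.transpose_smul, Matrix.transpose_one, Matrix.smul_mul,
        Matrix.mul_smul, Matrix.one_mul, Matrix.mul_one]
      module
    rw [h]
    exact hLyap
  rw [eigUp, dif_pos hH, Function.comp_apply]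
  exact eigenvalue_bound_aux n σ hH hCM.2 N hL _
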